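/- Let p ≥ 1, 1 ≤ m ≤ p, let H ~ Hypergeometric(p,m,m), and let G be the independent Rademacher random walk. Then for every t ≥ 0, E[exp(t·G_H²)] ≥ exp(t·m² − m·log(2ep/m)). Consequently, E[exp(t·G_H²)] cannot be bounded by an absolute constant unless t ≲ (1/m)·log(ep/m). -/

import Mathlib

open Real Finset

noncomputable section

/-- The probability `P(H = i)` for `H ~ Hypergeometric(p, m, m)`. -/
def hyperPMF (p m i : ℕ) : ℝ :=
  ((m.choose i : ℝ) * ((p - m).choose (m - i) : ℝ)) / (p.choose m : ℝ)

/-- `E[exp (t · G_i²)]` where `G_i` is the position of a symmetric (Rademacher)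
random walk after `i` steps. -/
def walkSqMGF (t : ℝ) (i : ℕ) : ℝ :=
  (1 / 2 ^ i) * ∑ s : Fin i → Bool, Real.exp (t * (∑ j, (if s j then (1 : ℝ) else -1)) ^ 2)

/-- `E[exp (t · G_H²)]` where `H ~ Hypergeometric(p, m, m)` and `G` is an independent
symmetric random walk. -/
def hyperWalkMGF (p m : ℕ) (t : ℝ) : ℝ :=
  ∑ i ∈ Finset.range (m + 1), hyperPMF p m i * walkSqMGF t i

/-- `E[exp (λ · H²)]` where `H ~ Hypergeometric(p, m, m)`. -/
def hyperSqMGF (p m : ℕ) (lam : ℝ) : ℝ :=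
  ∑ i ∈ Finset.range (m + 1), hyperPMF p m i * Real.exp (lam * (i : ℝ) ^ 2)

end

lemma hyperPMF_nonneg (p m i : ℕ) : 0 ≤ hyperPMF p m i := by
  unfold hyperPMF; positivity

lemma walkSqMGF_nonneg (t : ℝ) (i : ℕ) : 0 ≤ walkSqMGF t i := by
  unfold walkSqMGF; positivity

/-- lower bound on the MGF of the squared stopped random walk,
showing the necessity of `t ≲ (1/m)·log(ep/m)`. -/
theorem hyperWalkMGF_lower_bound (p m : ℕ) (hm : 1 ≤ m) (hmp : m ≤ p) :
    ∀ t : ℝ, 0 ≤ t →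
      Real.exp (t * (m : ℝ) ^ 2 - (m : ℝ) * Real.log (2 * Real.exp 1 * p / m)) ≤
        hyperWalkMGF p m t := by
  intro t ht
  have hm0 : (0 : ℝ) < m := by exact_mod_cast hm
  have hp0 : (0 : ℝ) < p := by exact_mod_cast lt_of_lt_of_le hm hmp
  set c : ℝ := 2 * Real.exp 1 * p / m with hc
  have hc0 : 0 < c := by positivity
  -- Step 1: the sum is at least the i = m term
  have key : hyperPMF p m m * walkSqMGF t m ≤ hyperWalkMGF p m t := by
    apply Finset.single_le_sum (f := fun i => hyperPMF p m i * walkSqMGF t i)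
    · intro i _; exact mul_nonneg (hyperPMF_nonneg p m i) (walkSqMGF_nonneg t i)
    · simp
  -- hyperPMF p m m = 1 / C(p,m)
  have hpmf : hyperPMF p m m = 1 / (p.choose m : ℝ) := by
    simp [hyperPMF, Nat.choose_self, Nat.sub_self]
  -- walkSqMGF t m ≥ exp (t m²) / 2^m
  have hwalk : (1 / 2 ^ m) * Real.exp (t * (m : ℝ) ^ 2) ≤ walkSqMGF t m := by
    unfold walkSqMGF
    have h1 : Real.exp (t * (m : ℝ) ^ 2) ≤
        ∑ s : Fin m → Bool, Real.exp (t * (∑ j, (if s j then (1 : ℝ) else -1)) ^ 2) := by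
      have := Finset.single_le_sum
        (f := fun s : Fin m → Bool =>
          Real.exp (t * (∑ j, (if s j then (1 : ℝ) else -1)) ^ 2))
        (fun s _ => (Real.exp_pos _).le) (Finset.mem_univ (fun _ => true))
      simpa using this
    have h2 : (0:ℝ) < 1 / 2 ^ m := by positivity
    nlinarith [h2, h1]
  -- combinatorial bound: C(p,m) * 2^m ≤ c^m
  have hchoose : (p.choose m : ℝ) * 2 ^ m ≤ c ^ m := by
    have h1 : (p.choose m : ℝ) ≤ (p : ℝ) ^ m / (m.factorial : ℝ) := by
      exact_mod_cast Nat.choose_le_pow_div m p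
    have h2 : (m : ℝ) ^ m / (m.factorial : ℝ) ≤ Real.exp m := by
      calc (m : ℝ) ^ m / (m.factorial : ℝ)
          ≤ ∑ i ∈ Finset.range (m + 1), (m : ℝ) ^ i / i.factorial := by
            refine Finset.single_le_sum (f := fun i => (m : ℝ) ^ i / (i.factorial : ℝ))
              (fun i _ => by positivity) (Finset.self_mem_range_succ m)
        _ ≤ Real.exp m := Real.sum_le_exp_of_nonneg hm0.le _
    have hfac0 : (0 : ℝ) < (m.factorial : ℝ) := by exact_mod_cast m.factorial_pos
    have h3 : (m : ℝ) ^ m ≤ Real.exp m * (m.factorial : ℝ) := by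
      rw [div_le_iff₀ hfac0] at h2; linarith
    have hcm : c ^ m = 2 ^ m * Real.exp m * (p : ℝ) ^ m / (m : ℝ) ^ m := by
      rw [hc]
      rw [div_pow, mul_pow, mul_pow, ← Real.exp_one_pow]
    rw [hcm, le_div_iff₀ (by positivity)]
    calc (p.choose m : ℝ) * 2 ^ m * (m : ℝ) ^ m
        ≤ ((p : ℝ) ^ m / (m.factorial : ℝ)) * 2 ^ m * ((Real.exp m) * (m.factorial : ℝ)) := by
          apply mul_le_mul (mul_le_mul_of_nonneg_right h1 (by positivity)) h3 (by positivity)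
          positivity
      _ = 2 ^ m * Real.exp m * (p : ℝ) ^ m := by field_simp
  -- now put together
  have hexp : Real.exp (t * (m : ℝ) ^ 2 - (m : ℝ) * Real.log c)
      = Real.exp (t * (m : ℝ) ^ 2) / c ^ m := by
    rw [Real.exp_sub]
    congr 1
    rw [Real.exp_nat_mul, Real.exp_log hc0]
  rw [hexp]
  refine le_trans ?_ key
  rw [hpmf]
  have hch0 : (0 : ℝ) < (p.choose m : ℝ) := by
    exact_mod_cast Nat.choose_pos hmp
  calc Real.exp (t * (m : ℝ) ^ 2) / c ^ m
      ≤ Real.exp (t * (m : ℝ) ^ 2) / ((p.choose m : ℝ) * 2 ^ m) := by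
        apply div_le_div_of_nonneg_left (Real.exp_pos _).le (by positivity) hchoose
    _ = 1 / (p.choose m : ℝ) * ((1 / 2 ^ m) * Real.exp (t * (m : ℝ) ^ 2)) := by
        field_simp
    _ ≤ 1 / (p.choose m : ℝ) * walkSqMGF t m := by
        apply mul_le_mul_of_nonneg_left hwalk (by positivity)
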